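/- Let k ≥ 2 and n be integers, and let z, 𝔷 be points of the upper half-plane such that either n ≥ 0, or z does not lie in the SL₂(ℤ)-orbit of 𝔷. Then the family indexed by M = [[α,β],[γ,δ]] ∈ SL₂(ℤ) with terms (γz + δ)^{−2k} · (M·z − conj(𝔷))^{−2k} · X_𝔷(M·z)^n is summable (i.e., the series ∑_{M ∈ SL₂(ℤ)} |(γz+δ)^{−2k} (M·z − conj(𝔷))^{−2k} X_𝔷(M·z)^n| converges), where M·z = (αz+β)/(γz+δ) and X_𝔷(w) := (w − 𝔷)/(w − conj(𝔷)). -/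

import Mathlib

open UpperHalfPlane Matrix MatrixGroups Complex EisensteinSeries

/-- The Möbius action of `M = [[α,β],[γ,δ]] ∈ SL₂(ℤ)` on a complex number `z`,
`M·z = (αz+β)/(γz+δ)`. -/
noncomputable def moebius (g : Matrix.SpecialLinearGroup (Fin 2) ℤ) (z : ℂ) : ℂ :=
  (((g.1 0 0 : ℤ) : ℂ) * z + ((g.1 0 1 : ℤ) : ℂ)) / (((g.1 1 0 : ℤ) : ℂ) * z + ((g.1 1 1 : ℤ) : ℂ))

/-- The automorphy factor `γz + δ` for `M = [[α,β],[γ,δ]] ∈ SL₂(ℤ)`. -/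
noncomputable def denomSL (g : Matrix.SpecialLinearGroup (Fin 2) ℤ) (z : ℂ) : ℂ :=
  ((g.1 1 0 : ℤ) : ℂ) * z + ((g.1 1 1 : ℤ) : ℂ)

lemma denomSL_eq (g : SL(2,ℤ)) (z : ℍ) : denomSL g (z:ℂ) = UpperHalfPlane.denom g z := by
  rw [ModularGroup.denom_apply]; rfl

lemma moebius_eq (g : SL(2,ℤ)) (z : ℍ) : moebius g (z:ℂ) = ((g • z : ℍ) : ℂ) := by
  rw [UpperHalfPlane.coe_specialLinearGroup_apply]
  simp [moebius]

lemma aux_im_le (ζ w : ℍ) : (ζ.im : ℝ) ≤ ‖(w:ℂ) - (starRingEnd ℂ) ζ‖ := by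
  have h1 : ((w:ℂ) - (starRingEnd ℂ) ζ).im = w.im + ζ.im := by
    simp [Complex.sub_im, Complex.conj_im, UpperHalfPlane.coe_im]
  calc (ζ.im : ℝ) ≤ w.im + ζ.im := by linarith [w.im_pos]
    _ = ((w:ℂ) - (starRingEnd ℂ) ζ).im := h1.symm
    _ ≤ |((w:ℂ) - (starRingEnd ℂ) ζ).im| := le_abs_self _
    _ ≤ ‖_‖ := Complex.abs_im_le_norm _

lemma aux_re_le (ζ w : ℍ) : |(w:ℂ).re - (ζ:ℂ).re| ≤ ‖(w:ℂ) - (starRingEnd ℂ) ζ‖ := by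
  have h1 : ((w:ℂ) - (starRingEnd ℂ) ζ).re = (w:ℂ).re - (ζ:ℂ).re := by
    simp [Complex.sub_re, Complex.conj_re]
  calc |(w:ℂ).re - (ζ:ℂ).re| = |((w:ℂ) - (starRingEnd ℂ) ζ).re| := by rw [h1]
    _ ≤ ‖_‖ := Complex.abs_re_le_norm _

lemma aux_X_lt (ζ w : ℍ) :
    ‖(w:ℂ) - ζ‖ < ‖(w:ℂ) - (starRingEnd ℂ) ζ‖ := by
  apply lt_of_pow_lt_pow_left₀ 2 (norm_nonneg _)
  rw [Complex.sq_norm, Complex.sq_norm, Complex.normSq_apply, Complex.normSq_apply]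
  simp only [Complex.sub_re, Complex.sub_im, Complex.conj_re, Complex.conj_im,
    UpperHalfPlane.coe_re, UpperHalfPlane.coe_im]
  nlinarith [w.im_pos, ζ.im_pos]

lemma rep_exists (z ζ : ℍ) (M : SL(2,ℤ)) : ∃ N : SL(2,ℤ), N.1 1 = M.1 1 ∧
    |((N • z : ℍ):ℂ).re - (ζ:ℂ).re| ≤ 1/2 := by
  set x := ((M • z : ℍ):ℂ).re - (ζ:ℂ).re with hx
  refine ⟨ModularGroup.T ^ (-(round x)) * M, ?_, ?_⟩
  · exact ModularGroup.T_pow_mul_apply_one _ M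
  · rw [mul_smul, ModularGroup.coe_T_zpow_smul_eq]
    rw [Complex.add_re]
    simp only [Complex.intCast_re]
    calc |((M • z : ℍ):ℂ).re + ((-(round x) : ℤ):ℝ) - (ζ:ℂ).re| = |x - round x| := by
          push_cast; rw [hx]; ring_nf
      _ ≤ 1/2 := abs_sub_round x

open Classical in
noncomputable def rep (z ζ : ℍ) (b : Fin 2 → ℤ) : SL(2,ℤ) :=
  if h : ∃ N : SL(2,ℤ), N.1 1 = b ∧ |((N • z : ℍ):ℂ).re - (ζ:ℂ).re| ≤ 1/2 then h.choose else 1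

lemma rep_spec (z ζ : ℍ) (M : SL(2,ℤ)) :
    (rep z ζ (M.1 1)).1 1 = M.1 1 ∧
      |(((rep z ζ (M.1 1)) • z : ℍ):ℂ).re - (ζ:ℂ).re| ≤ 1/2 := by
  have h := rep_exists z ζ M
  rw [rep, dif_pos h]
  exact h.choose_spec

lemma eq_T_zpow_mul (A B : SL(2,ℤ)) (h : A.1 1 = B.1 1) :
    A = ModularGroup.T ^ ((A * B⁻¹).1 0 1) * B := by
  have h0 : A.1 1 0 = B.1 1 0 := congrFun h 0
  have h1 : A.1 1 1 = B.1 1 1 := congrFun h 1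
  have hdetB := B.2
  rw [Matrix.det_fin_two] at hdetB
  have hBinv : (B⁻¹).1 = ![![B.1 1 1, -(B.1 0 1)], ![-(B.1 1 0), B.1 0 0]] := by
    rw [Matrix.SpecialLinearGroup.SL2_inv_expl]
  have hU : (A * B⁻¹).1 = A.1 * (B⁻¹).1 := rfl
  have e10 : (A * B⁻¹).1 1 0 = 0 := by
    simp only [Matrix.SpecialLinearGroup.coe_mul, Matrix.SpecialLinearGroup.coe_inv, Matrix.adjugate_fin_two, Matrix.mul_apply, Fin.sum_univ_two]
    simp [h0, h1]; ring
  have e11 : (A * B⁻¹).1 1 1 = 1 := by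
    simp only [Matrix.SpecialLinearGroup.coe_mul, Matrix.SpecialLinearGroup.coe_inv, Matrix.adjugate_fin_two, Matrix.mul_apply, Fin.sum_univ_two]
    simp [h0, h1]; linarith [hdetB]
  have hdetU := (A * B⁻¹).2
  rw [Matrix.det_fin_two, e10, e11] at hdetU
  have e00 : (A * B⁻¹).1 0 0 = 1 := by linarith
  have hTU : A * B⁻¹ = ModularGroup.T ^ ((A * B⁻¹).1 0 1) := by
    apply Subtype.ext
    rw [ModularGroup.coe_T_zpow]
    ext i j
    fin_cases i <;> fin_cases j <;> simp [e00, e10, e11]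
  calc A = (A * B⁻¹) * B := by group
    _ = ModularGroup.T ^ ((A * B⁻¹).1 0 1) * B := by rw [← hTU]

noncomputable def tc (z ζ : ℍ) (M : SL(2,ℤ)) : ℤ := (M * (rep z ζ (M.1 1))⁻¹).1 0 1

lemma M_decomp (z ζ : ℍ) (M : SL(2,ℤ)) :
    M = ModularGroup.T ^ (tc z ζ M) * rep z ζ (M.1 1) :=
  eq_T_zpow_mul M _ (rep_spec z ζ M).1.symm

lemma Phi_inj (z ζ : ℍ) : Function.Injective
    (fun M : SL(2,ℤ) => ((M.1 1, tc z ζ M) : (Fin 2 → ℤ) × ℤ)) := by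
  intro M M' hMM
  simp only [Prod.mk.injEq] at hMM
  obtain ⟨h1, h2⟩ := hMM
  have d2 := M_decomp z ζ M'
  rw [M_decomp z ζ M, h2, h1]
  exact d2.symm

lemma coe_smul_decomp (z ζ : ℍ) (M : SL(2,ℤ)) :
    ((M • z : ℍ) : ℂ) = ((rep z ζ (M.1 1) • z : ℍ) : ℂ) + (tc z ζ M : ℤ) := by
  conv_lhs => rw [M_decomp z ζ M]
  rw [mul_smul, ModularGroup.coe_T_zpow_smul_eq]

lemma denom_eq_rep (z ζ : ℍ) (M : SL(2,ℤ)) :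
    UpperHalfPlane.denom M z = UpperHalfPlane.denom (rep z ζ (M.1 1)) z := by
  have h := (rep_spec z ζ M).1
  rw [ModularGroup.denom_apply, ModularGroup.denom_apply,
    show ((rep z ζ (M.1 1)) : Matrix (Fin 2) (Fin 2) ℤ) 1 0 = M.1 1 0 from congrFun h 0,
    show ((rep z ζ (M.1 1)) : Matrix (Fin 2) (Fin 2) ℤ) 1 1 = M.1 1 1 from congrFun h 1]

lemma botrow_ne_zero (M : SL(2,ℤ)) : M.1 1 ≠ 0 := by
  intro hb
  have hd := M.2
  rw [Matrix.det_fin_two] at hd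
  have h0 : M.1 1 0 = 0 := by rw [hb]; rfl
  have h1 : M.1 1 1 = 0 := by rw [hb]; rfl
  rw [h0, h1] at hd
  simp at hd

noncomputable def psi (v : ℝ) (t : ℤ) : ℝ := 16 / (t:ℝ)^4 + (if t = 0 then (v^4)⁻¹ else 0)

lemma psi_nonneg (v : ℝ) (t : ℤ) : 0 ≤ psi v t := by
  apply add_nonneg (by positivity)
  split <;> positivity

lemma psi_summable (v : ℝ) : Summable (psi v) := by
  apply Summable.add
  · have h := (Real.summable_one_div_int_pow (p := 4)).mpr (by norm_num)
    have := h.mul_left (16:ℝ)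
    refine this.congr fun t => ?_
    rw [mul_one_div]
  · apply summable_of_ne_finset_zero (s := ({0} : Finset ℤ))
    intro t ht
    simp only [Finset.mem_singleton] at ht
    simp [ht]

noncomputable def f0 (k : ℕ) (z ζ : ℍ) (M : SL(2,ℤ)) : ℝ :=
  (‖UpperHalfPlane.denom M z‖ ^ (2*k))⁻¹ *
  (‖((M • z : ℍ):ℂ) - (starRingEnd ℂ) (ζ:ℂ)‖ ^ (2*k))⁻¹

lemma core_summable (k : ℕ) (hk : 2 ≤ k) (z ζ : ℍ) : Summable (f0 k z ζ) := by
  set v := ζ.im with hvdef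
  have hv0 : 0 < v := ζ.im_pos
  have hr0 : 0 < r z := r_pos z
  set C : ℝ := ((r z)^(2*k))⁻¹ * (v^(2*k-4))⁻¹ with hC
  have hGsum : Summable (fun p : (Fin 2 → ℤ) × ℤ => (C * (‖p.1‖^(2*k))⁻¹) * psi v p.2) := by
    have h1 : Summable (fun b : Fin 2 → ℤ => (‖b‖^(2*k))⁻¹) := by
      have h2 : (2:ℝ) < (2*k : ℕ) := by exact_mod_cast (by omega : 2 < 2*k)
      refine (summable_one_div_norm_rpow h2).congr fun b => ?_
      rw [← Real.rpow_natCast ‖b‖ (2*k), ← Real.rpow_neg (norm_nonneg _)]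
    exact (h1.mul_left C).mul_of_nonneg (psi_summable v)
      (fun b => by positivity) (fun t => psi_nonneg v t)
  apply Summable.of_nonneg_of_le (fun M => by unfold f0; positivity) _
    (hGsum.comp_injective (Phi_inj z ζ))
  intro M
  simp only [Function.comp_apply]
  set b := M.1 1 with hb
  set t := tc z ζ M with ht
  set D := ‖UpperHalfPlane.denom M z‖ with hD
  set A := ‖((M • z : ℍ):ℂ) - (starRingEnd ℂ) (ζ:ℂ)‖ with hA
  have hbne : b ≠ 0 := botrow_ne_zero M
  have hDlb : r z * ‖b‖ ≤ D := by
    rw [hD, ModularGroup.denom_apply]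
    exact r_mul_max_le z hbne
  have hrb : 0 < r z * ‖b‖ := mul_pos hr0 (norm_pos_iff.mpr hbne)
  have hD0 : 0 < D := lt_of_lt_of_le hrb hDlb
  have hAv : v ≤ A := aux_im_le ζ (M • z)
  have hA0 : 0 < A := lt_of_lt_of_le hv0 hAv
  have hA4 : (A^4)⁻¹ ≤ psi v t := by
    by_cases h0 : t = 0
    · have : v^4 ≤ A^4 := pow_le_pow_left₀ hv0.le hAv 4
      have h4 : (A^4)⁻¹ ≤ (v^4)⁻¹ := inv_anti₀ (by positivity) this
      rw [h0]
      simpa [psi] using h4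
    · have h1t : (1:ℝ) ≤ |(t:ℝ)| := by
        rw [← Int.cast_abs]
        exact_mod_cast Int.one_le_abs (by exact_mod_cast h0)
      have hx : |((rep z ζ b • z : ℍ):ℂ).re - (ζ:ℂ).re| ≤ 1/2 := (rep_spec z ζ M).2
      have hre : ((M • z : ℍ):ℂ).re - (ζ:ℂ).re
          = (((rep z ζ b • z : ℍ):ℂ).re - (ζ:ℂ).re) + (t:ℝ) := by
        rw [coe_smul_decomp z ζ M, Complex.add_re, Complex.intCast_re]
        ring
      have hAre : |((M • z : ℍ):ℂ).re - (ζ:ℂ).re| ≤ A := aux_re_le ζ (M • z)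
      have habs : |(t:ℝ)|/2 ≤ A := by
        have h5 : |(t:ℝ)| - 1/2 ≤ |(((rep z ζ b • z : ℍ):ℂ).re - (ζ:ℂ).re) + (t:ℝ)| := by
          have := abs_add_le (((rep z ζ b • z : ℍ):ℂ).re - (ζ:ℂ).re) (t:ℝ)
          have h6 := abs_sub_abs_le_abs_sub (t:ℝ) (-((((rep z ζ b • z : ℍ):ℂ).re - (ζ:ℂ).re)))
          rw [abs_neg] at h6
          have h7 : (t:ℝ) - (-((((rep z ζ b • z : ℍ):ℂ).re - (ζ:ℂ).re))) =
            (((rep z ζ b • z : ℍ):ℂ).re - (ζ:ℂ).re) + (t:ℝ) := by ring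
          rw [h7] at h6
          linarith
        rw [hre] at hAre
        linarith
      have hA4' : (|(t:ℝ)|/2)^4 ≤ A^4 := pow_le_pow_left₀ (by positivity) habs 4
      have ht4 : (|(t:ℝ)|/2)^4 = (t:ℝ)^4/16 := by
        rw [div_pow]
        have h8 : |(t:ℝ)|^4 = (t:ℝ)^4 := by
          rw [← _root_.abs_pow]; exact _root_.abs_of_nonneg (by positivity)
        rw [h8]; norm_num
      have htpos : (0:ℝ) < (t:ℝ)^4/16 := by
        have : (0:ℝ) < |(t:ℝ)| := by linarith
        rw [← ht4]; positivity
      have : (A^4)⁻¹ ≤ ((t:ℝ)^4/16)⁻¹ := inv_anti₀ htpos (by rw [← ht4]; exact hA4')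
      calc (A^4)⁻¹ ≤ ((t:ℝ)^4/16)⁻¹ := this
        _ = 16/(t:ℝ)^4 := by rw [inv_div]
        _ ≤ psi v t := by simp [psi, h0]
  have hsplit : (A^(2*k))⁻¹ ≤ (v^(2*k-4))⁻¹ * psi v t := by
    have h44 : (2*k-4) + 4 = 2*k := by omega
    have hA2k : v^(2*k-4) * A^4 ≤ A^(2*k) := by
      calc v^(2*k-4) * A^4 ≤ A^(2*k-4) * A^4 :=
            mul_le_mul_of_nonneg_right (pow_le_pow_left₀ hv0.le hAv _) (by positivity)
        _ = A^(2*k) := by rw [← pow_add, h44]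
    calc (A^(2*k))⁻¹ ≤ (v^(2*k-4) * A^4)⁻¹ := inv_anti₀ (by positivity) hA2k
      _ = (v^(2*k-4))⁻¹ * (A^4)⁻¹ := by rw [mul_inv]
      _ ≤ (v^(2*k-4))⁻¹ * psi v t := mul_le_mul_of_nonneg_left hA4 (by positivity)
  have hDsplit : (D^(2*k))⁻¹ ≤ ((r z)^(2*k))⁻¹ * (‖b‖^(2*k))⁻¹ := by
    calc (D^(2*k))⁻¹ ≤ ((r z * ‖b‖)^(2*k))⁻¹ :=
          inv_anti₀ (by positivity) (pow_le_pow_left₀ hrb.le hDlb _)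
      _ = ((r z)^(2*k))⁻¹ * (‖b‖^(2*k))⁻¹ := by rw [mul_pow, mul_inv]
  calc f0 k z ζ M = (D^(2*k))⁻¹ * (A^(2*k))⁻¹ := rfl
    _ ≤ (((r z)^(2*k))⁻¹ * (‖b‖^(2*k))⁻¹) * ((v^(2*k-4))⁻¹ * psi v t) := by
        apply mul_le_mul hDsplit hsplit (by positivity) (by positivity)
    _ = (C * (‖b‖^(2*k))⁻¹) * psi v t := by rw [hC]; ring

lemma abs_zpow_neg2k (k : ℕ) (x : ℂ) :
    ‖x ^ (-(2 * (k:ℤ)))‖ = (‖x‖ ^ (2*k))⁻¹ := by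
  rw [norm_zpow, show -(2*(k:ℤ)) = -((2*k : ℕ) : ℤ) by push_cast; ring, _root_.zpow_neg, zpow_natCast]

/-- For integers `k ≥ 2`, `n`, and points `z, 𝔷` of the upper half-plane such
that either `n ≥ 0` or `z` is not in the `SL₂(ℤ)`-orbit of `𝔷`, the family
`(γz+δ)^{−2k} (M·z − conj 𝔷)^{−2k} X_𝔷(M·z)^n`, `M ∈ SL₂(ℤ)`, is absolutely summable. -/
theorem stmt_16 (k : ℕ) (hk : 2 ≤ k) (n : ℤ) (z ζ : UpperHalfPlane)
    (h : 0 ≤ n ∨ ∀ g : Matrix.SpecialLinearGroup (Fin 2) ℤ, moebius g (z : ℂ) ≠ (ζ : ℂ)) :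
    Summable (fun g : Matrix.SpecialLinearGroup (Fin 2) ℤ =>
      ‖denomSL g (z : ℂ) ^ (-(2 * (k : ℤ)))
        * (moebius g (z : ℂ) - (starRingEnd ℂ) (ζ : ℂ)) ^ (-(2 * (k : ℤ)))
        * ((moebius g (z : ℂ) - (ζ : ℂ))
            / (moebius g (z : ℂ) - (starRingEnd ℂ) (ζ : ℂ))) ^ n‖) := by
  have hcore := core_summable k hk z ζ
  have hv0 : 0 < ζ.im := ζ.im_pos
  obtain ⟨B, hB⟩ : ∃ B : ℝ, ∀ M : SL(2,ℤ),
      (‖(((M • z : ℍ):ℂ) - ζ) / (((M • z : ℍ):ℂ) - (starRingEnd ℂ) (ζ:ℂ))‖) ^ n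
        ≤ B := by
    by_cases hn : 0 ≤ n
    · refine ⟨1, fun M => ?_⟩
      obtain ⟨m, rfl⟩ := Int.eq_ofNat_of_zero_le hn
      rw [zpow_natCast]
      apply pow_le_one₀ (norm_nonneg _)
      rw [norm_div]
      apply le_of_lt
      rw [div_lt_one (lt_of_lt_of_le hv0 (aux_im_le ζ (M • z)))]
      exact aux_X_lt ζ (M • z)
    · have horb := h.resolve_left hn
      have hn' : n < 0 := not_le.mp hn
      set XC : SL(2,ℤ) → ℂ := fun M =>
        (((M • z : ℍ):ℂ) - ζ) / (((M • z : ℍ):ℂ) - (starRingEnd ℂ) (ζ:ℂ)) with hXC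
      set S : Set SL(2,ℤ) := {M | ‖XC M‖ < 1/4} with hS
      have hy0 : 0 < z.im := z.im_pos
      set δ : ℝ := ((Real.sqrt (3 * z.im / ζ.im))^(2*k))⁻¹ * ((3*ζ.im)^(2*k))⁻¹ with hδdef
      have hsq0 : 0 < Real.sqrt (3 * z.im / ζ.im) := Real.sqrt_pos.mpr (by positivity)
      have hδ : 0 < δ := by positivity
      have hSsub : ∀ M ∈ S, δ ≤ f0 k z ζ M := by
        intro M hM
        simp only [hS, Set.mem_setOf_eq] at hM
        set w := ((M • z : ℍ):ℂ) with hw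
        set A := ‖w - (starRingEnd ℂ) (ζ:ℂ)‖ with hA
        have hAv : ζ.im ≤ A := aux_im_le ζ (M • z)
        have hA0 : 0 < A := lt_of_lt_of_le hv0 hAv
        have h2v : ‖(ζ:ℂ) - (starRingEnd ℂ) (ζ:ℂ)‖ = 2*ζ.im := by
          rw [Complex.sub_conj, norm_mul, Complex.norm_I, mul_one, Complex.norm_real, Real.norm_eq_abs]
          rw [UpperHalfPlane.coe_im, abs_of_pos (by positivity)]
        have htri : A ≤ ‖w - ζ‖ + 2*ζ.im := by
          calc A = ‖(w - ζ) + ((ζ:ℂ) - (starRingEnd ℂ) (ζ:ℂ))‖ := by rw [hA, sub_add_sub_cancel]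
            _ ≤ ‖w - ζ‖ + ‖(ζ:ℂ) - (starRingEnd ℂ) (ζ:ℂ)‖ :=
                norm_add_le _ _
            _ = ‖w - ζ‖ + 2*ζ.im := by rw [h2v]
        have hXval : ‖XC M‖ = ‖w - ζ‖ / A := norm_div _ _
        have hwζ : ‖w - ζ‖ < (2/3) * ζ.im := by
          rw [hXval, div_lt_iff₀ hA0] at hM
          linarith
        have hIm : ζ.im/3 ≤ (M • z : ℍ).im := by
          have h1 : (w - (ζ:ℂ)).im = (M • z : ℍ).im - ζ.im := by
            rw [Complex.sub_im, hw, UpperHalfPlane.coe_im, UpperHalfPlane.coe_im]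
          have h2 : |(w - ζ).im| ≤ ‖w - ζ‖ := Complex.abs_im_le_norm _
          have h3 := neg_abs_le ((w - ζ).im)
          linarith
        have hden_ne : UpperHalfPlane.denom M z ≠ 0 := UpperHalfPlane.denom_ne_zero _ z
        have hns_pos : 0 < Complex.normSq (UpperHalfPlane.denom M z) :=
          Complex.normSq_pos.mpr hden_ne
        have him := ModularGroup.im_smul_eq_div_normSq M z
        have h3' : (M • z : ℍ).im * Complex.normSq (UpperHalfPlane.denom M z) = z.im := by
          rw [him]; field_simp
        have hnsle : Complex.normSq (UpperHalfPlane.denom M z) * ζ.im ≤ 3 * z.im := by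
          nlinarith [hIm, hns_pos]
        have hDle : ‖UpperHalfPlane.denom M z‖ ≤ Real.sqrt (3 * z.im / ζ.im) := by
          rw [Complex.norm_def]
          apply Real.sqrt_le_sqrt
          rw [le_div_iff₀ hv0]
          exact hnsle
        have hA3v : A ≤ 3*ζ.im := by linarith
        have hD0' : 0 < ‖UpperHalfPlane.denom M z‖ :=
          norm_pos_iff.mpr hden_ne
        have e1 : ((Real.sqrt (3 * z.im / ζ.im))^(2*k))⁻¹
            ≤ (‖UpperHalfPlane.denom M z‖ ^ (2*k))⁻¹ :=
          inv_anti₀ (by positivity) (pow_le_pow_left₀ (norm_nonneg _) hDle _)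
        have e2 : ((3*ζ.im)^(2*k))⁻¹ ≤ (A ^ (2*k))⁻¹ :=
          inv_anti₀ (by positivity) (pow_le_pow_left₀ (norm_nonneg _) hA3v _)
        exact mul_le_mul e1 e2 (by positivity) (by positivity)
      have hSfin : S.Finite := by
        have hev : ∀ᶠ M in Filter.cofinite, f0 k z ζ M < δ :=
          hcore.tendsto_cofinite_zero.eventually_lt_const hδ
        apply (Filter.eventually_cofinite.mp hev).subset
        intro M hM
        exact not_lt.mpr (hSsub M hM)
      classical
      set T : Finset ℝ :=
        insert (1/4 : ℝ) (hSfin.toFinset.image (fun M => ‖XC M‖)) with hT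
      have hTne : T.Nonempty := ⟨1/4, Finset.mem_insert_self _ _⟩
      have hXpos : ∀ M : SL(2,ℤ), 0 < ‖XC M‖ := by
        intro M
        apply norm_pos_iff.mpr
        apply div_ne_zero
        · exact sub_ne_zero.mpr (by rw [← moebius_eq]; exact horb M)
        · intro hc
          have h9 := aux_im_le ζ (M • z)
          rw [hc, norm_zero] at h9
          linarith
      have hε0 : 0 < T.min' hTne := by
        have hmem := T.min'_mem hTne
        rcases Finset.mem_insert.mp hmem with h9 | h9
        · rw [h9]; norm_num
        · obtain ⟨M, -, hM⟩ := Finset.mem_image.mp h9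
          rw [← hM]; exact hXpos M
      have hεle : ∀ M : SL(2,ℤ), T.min' hTne ≤ ‖XC M‖ := by
        intro M
        by_cases hM : M ∈ S
        · exact T.min'_le _ (Finset.mem_insert_of_mem
            (Finset.mem_image_of_mem _ (hSfin.mem_toFinset.mpr hM)))
        · simp only [hS, Set.mem_setOf_eq] at hM
          exact le_trans (T.min'_le _ (Finset.mem_insert_self _ _)) (not_lt.mp hM)
      refine ⟨(T.min' hTne) ^ n, fun M => ?_⟩
      obtain ⟨m, hm⟩ := Int.exists_eq_neg_ofNat hn'.le
      rw [hm, _root_.zpow_neg, _root_.zpow_neg, zpow_natCast, zpow_natCast]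
      exact inv_anti₀ (by positivity) (pow_le_pow_left₀ hε0.le (hεle M) m)
  apply Summable.of_nonneg_of_le (fun M => norm_nonneg _) _ (hcore.mul_left B)
  intro M
  rw [norm_mul, norm_mul, denomSL_eq, moebius_eq, abs_zpow_neg2k, abs_zpow_neg2k, norm_zpow]
  have hf0 : f0 k z ζ M = (‖UpperHalfPlane.denom M z‖ ^ (2*k))⁻¹ *
      (‖((M • z : ℍ):ℂ) - (starRingEnd ℂ) (ζ:ℂ)‖ ^ (2*k))⁻¹ := rfl
  calc (‖UpperHalfPlane.denom M z‖ ^ (2*k))⁻¹ *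
        (‖((M • z : ℍ):ℂ) - (starRingEnd ℂ) (ζ:ℂ)‖ ^ (2*k))⁻¹ *
        (‖(((M • z : ℍ):ℂ) - ζ) / (((M • z : ℍ):ℂ) - (starRingEnd ℂ) (ζ:ℂ))‖) ^ n
      ≤ (‖UpperHalfPlane.denom M z‖ ^ (2*k))⁻¹ *
        (‖((M • z : ℍ):ℂ) - (starRingEnd ℂ) (ζ:ℂ)‖ ^ (2*k))⁻¹ * B := by
        apply mul_le_mul_of_nonneg_left (hB M) (by positivity)
    _ = B * f0 k z ζ M := by rw [hf0]; ring
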